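/- (Čech descent.) Let κ be a regular cardinal and let (C, τ) be a κ-geometric site. Then a presheaf F : Cᵒᵖ ⥤ Type is a sheaf for the Grothendieck topology generated by τ if and only if both of the following hold: (1) F preserves κ-small products; and (2) for every τ-covering family {fᵢ : Uᵢ ⟶ X} indexed by a κ-small type, F satisfies the sheaf condition for the singleton presieve of the induced morphism Sigma.desc fᵢ : ∐ᵢ Uᵢ ⟶ X (equivalently, F(X) is the equalizer of the two maps F(∐ᵢ Uᵢ) ⇉ F((∐ᵢ Uᵢ) ×_X (∐ᵢ Uᵢ))). -/

import Mathlib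

/-!
Statement 1 (Čech descent): For a `κ`-geometric site `(C, τ)`, a presheaf `F : Cᵒᵖ ⥤ Type`
is a sheaf for the Grothendieck topology generated by `τ` iff `F` preserves `κ`-small
products and satisfies the sheaf condition for the singleton presieve of the induced map
`∐ᵢ Uᵢ ⟶ X` for every `κ`-small `τ`-covering family `{fᵢ : Uᵢ ⟶ X}`.
-/

open CategoryTheory Limits

universe u

/-- A presheaf `F : Cᵒᵖ ⥤ Type u` preserves `κ`-small products if it sends every coproduct
cocone of a family indexed by a `κ`-small type to a limit cone in `Type u`. -/
def PreservesKappaSmallProducts {C : Type u} [Category.{u} C] (κ : Cardinal.{u})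
    (F : Cᵒᵖ ⥤ Type u) : Prop :=
  ∀ {ι : Type u}, Cardinal.mk ι < κ → ∀ (X : ι → C) (c : Cofan X), IsColimit c →
    Nonempty (IsLimit (F.mapCone c.op))

/-- A category `C` with pullbacks is `κ`-geometric if it has coproducts of all `κ`-small
families of objects, and these coproducts are disjoint and universal. -/
structure KappaGeometric (κ : Cardinal.{u}) (C : Type u) [Category.{u} C]
    [HasPullbacks C] : Prop where
  hasCoproduct : ∀ {ι : Type u}, Cardinal.mk ι < κ → ∀ X : ι → C, HasCoproduct X
  mono_inj : ∀ {ι : Type u}, Cardinal.mk ι < κ → ∀ (X : ι → C) (c : Cofan X),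
    IsColimit c → ∀ i, Mono (c.inj i)
  disjoint : ∀ {ι : Type u}, Cardinal.mk ι < κ → ∀ (X : ι → C) (c : Cofan X),
    IsColimit c → ∀ i j, i ≠ j → Nonempty (IsInitial (pullback (c.inj i) (c.inj j)))
  universal : ∀ {ι : Type u}, Cardinal.mk ι < κ → ∀ (X : ι → C) (c : Cofan X),
    IsColimit c → ∀ {Y : C} (f : Y ⟶ c.pt),
      Nonempty (IsColimit (Cofan.mk Y (fun i => pullback.snd (c.inj i) f)))

/-- A `κ`-geometric site is a `κ`-geometric category together with a Grothendieck
pretopology `τ` such that the presieve of coproduct inclusions of any `κ`-small family is a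
`τ`-covering, and every `τ`-covering presieve is given by a family of morphisms indexed by a
`κ`-small type. -/
structure IsKappaGeometricSite (κ : Cardinal.{u}) (C : Type u) [Category.{u} C]
    [HasPullbacks C] (τ : Pretopology C) : Prop where
  geometric : KappaGeometric κ C
  coproduct_mem : ∀ {ι : Type u}, Cardinal.mk ι < κ → ∀ (X : ι → C) (c : Cofan X),
    IsColimit c → Presieve.ofArrows X c.inj ∈ τ c.pt
  small_coverings : ∀ ⦃X : C⦄ (R : Presieve X), R ∈ τ X →
    ∃ (ι : Type u), Cardinal.mk ι < κ ∧
      ∃ (Z : ι → C) (g : ∀ i, Z i ⟶ X), R = Presieve.ofArrows Z g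

namespace CechAux

open Opposite

variable {C : Type u} [Category.{u} C] [HasPullbacks C] {κ : Cardinal.{u}}
  {τ : Pretopology C} {F : Cᵒᵖ ⥤ Type u}

theorem mapcomp {A B D : C} (u : A ⟶ B) (v : B ⟶ D) (z : F.obj (op D)) :
    F.map (u ≫ v).op z = F.map u.op (F.map v.op z) := by
  rw [op_comp, F.map_comp]; rfl

theorem bijective_of_isLimit {ι : Type u} {X : ι → C} (c : Cofan X)
    (hl : IsLimit (F.mapCone c.op)) :
    Function.Bijective (fun (y : F.obj (op c.pt)) (i : ι) => F.map (c.inj i).op y) := by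
  constructor
  · intro y y' h
    have heq : (TypeCat.ofHom (fun _ : PUnit.{u+1} => y)) = (TypeCat.ofHom fun _ => y') := by
      apply hl.hom_ext
      rintro ⟨i⟩
      ext z
      exact congrFun h i
    exact types_congr_hom heq PUnit.unit
  · intro x
    let s : Cone (Discrete.functor (fun i => op (X i)) ⋙ F) :=
      { pt := PUnit.{u+1}
        π :=
          { app := fun j => TypeCat.ofHom (fun _ => x j.as)
            naturality := by
              rintro ⟨i⟩ ⟨i'⟩ f
              obtain ⟨⟨h⟩⟩ := f
              cases h
              ext z
              simp } }
    exact ⟨hl.lift s PUnit.unit, funext fun i => types_congr_hom (hl.fac s ⟨i⟩) PUnit.unit⟩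

theorem eq_of_initial (hτ : IsKappaGeometricSite κ C τ) (hκ : κ.IsRegular)
    (hF : Presieve.IsSheaf (τ.toGrothendieck) F) {P : C} (hP : IsInitial P)
    (a b : F.obj (op P)) : a = b := by
  have hsmall : Cardinal.mk (PEmpty.{u+1}) < κ := by
    rw [Cardinal.mk_eq_zero]; exact hκ.pos
  let Xe : PEmpty.{u+1} → C := fun i => i.elim
  let c : Cofan Xe := Cofan.mk P (fun i => i.elim)
  have hc : IsColimit c :=
    mkCofanColimit _ (fun t => hP.to t.pt) (fun t i => i.elim)
      (fun t m _ => hP.hom_ext m (hP.to t.pt))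
  have hsf : Presieve.IsSheafFor F (Presieve.ofArrows Xe c.inj) :=
    (Presieve.isSheaf_pretopology _).mp hF _ (hτ.coproduct_mem hsmall Xe c hc)
  rw [Presieve.isSheafFor_arrows_iff] at hsf
  obtain ⟨t, -, ht⟩ := hsf (fun i => i.elim) (fun i => i.elim)
  exact (ht a (fun i => i.elim)).trans (ht b (fun i => i.elim)).symm

theorem preserves_of_isSheaf (hτ : IsKappaGeometricSite κ C τ) (hκ : κ.IsRegular)
    (hF : Presieve.IsSheaf (τ.toGrothendieck) F) :
    PreservesKappaSmallProducts κ F := by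
  intro ι hι X c hc
  have hsf : Presieve.IsSheafFor F (Presieve.ofArrows X c.inj) :=
    (Presieve.isSheaf_pretopology _).mp hF _ (hτ.coproduct_mem hι X c hc)
  rw [Presieve.isSheafFor_arrows_iff] at hsf
  have compat : ∀ (x : ∀ i, F.obj (op (X i))), Presieve.Arrows.Compatible F c.inj x := by
    intro x i j Z gi gj hg
    by_cases h : i = j
    · subst h
      have : Mono (c.inj i) := hτ.geometric.mono_inj hι X c hc i
      obtain rfl : gi = gj := (cancel_mono (c.inj i)).mp hg
      rfl
    · obtain ⟨hinit⟩ := hτ.geometric.disjoint hι X c hc i j h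
      calc F.map gi.op (x i)
          = F.map (pullback.lift gi gj hg ≫ pullback.fst (c.inj i) (c.inj j)).op (x i) := by
            rw [pullback.lift_fst]
        _ = F.map (pullback.lift gi gj hg).op
              (F.map (pullback.fst (c.inj i) (c.inj j)).op (x i)) := mapcomp _ _ _
        _ = F.map (pullback.lift gi gj hg).op
              (F.map (pullback.snd (c.inj i) (c.inj j)).op (x j)) := by
            rw [eq_of_initial hτ hκ hF hinit
              (F.map (pullback.fst (c.inj i) (c.inj j)).op (x i))
              (F.map (pullback.snd (c.inj i) (c.inj j)).op (x j))]
        _ = F.map (pullback.lift gi gj hg ≫ pullback.snd (c.inj i) (c.inj j)).op (x j) :=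
            (mapcomp _ _ _).symm
        _ = F.map gj.op (x j) := by rw [pullback.lift_snd]
  refine ⟨{ lift := fun s => TypeCat.ofHom fun a => (hsf (fun i => s.π.app ⟨i⟩ a) (compat _)).choose
            fac := ?_
            uniq := ?_ }⟩
  · rintro s ⟨i⟩
    ext a
    exact (hsf _ (compat _)).choose_spec.1 i
  · intro s m hm
    ext a
    exact (hsf _ (compat _)).choose_spec.2 (m a) (fun i => types_congr_hom (hm ⟨i⟩) a)

theorem singleton_of_isSheaf (hτ : IsKappaGeometricSite κ C τ)
    (hF : Presieve.IsSheaf (τ.toGrothendieck) F) {ι : Type u} {X : C} (U : ι → C)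
    (f : ∀ i, U i ⟶ X) (hmem : Presieve.ofArrows U f ∈ τ X) (c : Cofan U)
    (hc : IsColimit c) :
    Presieve.IsSheafFor F (Presieve.singleton (hc.desc (Cofan.mk X f))) := by
  set d := hc.desc (Cofan.mk X f) with hd_def
  have hd : ∀ i, c.inj i ≫ d = f i := fun i => hc.fac (Cofan.mk X f) ⟨i⟩
  have hmem' : Sieve.generate (Presieve.singleton d) ∈ τ.toGrothendieck X := by
    refine ⟨Presieve.ofArrows U f, hmem, ?_⟩
    rintro Y g ⟨i⟩
    exact ⟨c.pt, c.inj i, d, Presieve.singleton.mk, hd i⟩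
  exact (Presieve.isSheafFor_iff_generate (Presieve.singleton d)).mpr (hF _ hmem')

theorem isSheaf_of (hκ : κ.IsRegular) (hτ : IsKappaGeometricSite κ C τ)
    (h1 : PreservesKappaSmallProducts κ F)
    (h2 : ∀ {ι : Type u}, Cardinal.mk ι < κ → ∀ {X : C} (U : ι → C) (f : ∀ i, U i ⟶ X),
      Presieve.ofArrows U f ∈ τ X →
        ∀ (c : Cofan U) (hc : IsColimit c),
          Presieve.IsSheafFor F (Presieve.singleton (hc.desc (Cofan.mk X f)))) :
    Presieve.IsSheaf (τ.toGrothendieck) F := by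
  rw [Presieve.isSheaf_pretopology]
  intro X R hR
  obtain ⟨ι, hι, U, f, rfl⟩ := hτ.small_coverings R hR
  have : HasCoproduct U := hτ.geometric.hasCoproduct hι U
  let c : Cofan U := Cofan.mk (∐ U) (Sigma.ι U)
  have hc : IsColimit c := coproductIsCoproduct U
  set d := hc.desc (Cofan.mk X f) with hd_def
  have hd : ∀ i, c.inj i ≫ d = f i := fun i => hc.fac (Cofan.mk X f) ⟨i⟩
  obtain ⟨hlim⟩ := h1 hι U c hc
  have hbij := bijective_of_isLimit c hlim
  have hsing0 := h2 hι U f hR c hc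
  have hs : Presieve.IsSheafFor F
      (Presieve.ofArrows (fun _ : PUnit.{u+1} => c.pt) (fun _ => d)) := by
    rw [Presieve.ofArrows_pUnit]; exact hsing0
  have hsing := (Presieve.isSheafFor_arrows_iff _ _).mp hs
  rw [Presieve.isSheafFor_arrows_iff]
  intro x hx
  obtain ⟨y, hy⟩ := hbij.2 x
  have hy' : ∀ i, F.map (c.inj i).op y = x i := fun i => congrFun hy i
  have ycompat : ∀ (Z : C) (g₁ g₂ : Z ⟶ c.pt), g₁ ≫ d = g₂ ≫ d →
      F.map g₁.op y = F.map g₂.op y := by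
    intro Z g₁ g₂ hg
    obtain ⟨hc1⟩ := hτ.geometric.universal hι U c hc g₁
    obtain ⟨hl1⟩ := h1 hι _ _ hc1
    apply (bijective_of_isLimit _ hl1).1
    funext i
    show F.map (pullback.snd (c.inj i) g₁).op (F.map g₁.op y)
        = F.map (pullback.snd (c.inj i) g₁).op (F.map g₂.op y)
    set q := pullback.snd (c.inj i) g₁ with hq_def
    set a := pullback.fst (c.inj i) g₁ with ha_def
    have hcond1 : a ≫ c.inj i = q ≫ g₁ := pullback.condition
    obtain ⟨hc2⟩ := hτ.geometric.universal hι U c hc (q ≫ g₂)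
    obtain ⟨hl2⟩ := h1 hι _ _ hc2
    apply (bijective_of_isLimit _ hl2).1
    funext j
    show F.map (pullback.snd (c.inj j) (q ≫ g₂)).op
          (F.map q.op (F.map g₁.op y))
        = F.map (pullback.snd (c.inj j) (q ≫ g₂)).op
          (F.map q.op (F.map g₂.op y))
    set r := pullback.snd (c.inj j) (q ≫ g₂) with hr_def
    set b := pullback.fst (c.inj j) (q ≫ g₂) with hb_def
    have hcond2 : b ≫ c.inj j = r ≫ (q ≫ g₂) := pullback.condition
    have key : (r ≫ a) ≫ f i = b ≫ f j := by
      rw [← hd i, ← hd j]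
      calc (r ≫ a) ≫ c.inj i ≫ d = r ≫ (a ≫ c.inj i) ≫ d := by
            simp only [Category.assoc]
        _ = r ≫ (q ≫ g₁) ≫ d := by rw [hcond1]
        _ = r ≫ (q ≫ g₂) ≫ d := by
            rw [Category.assoc q g₁ d, hg, ← Category.assoc q g₂ d]
        _ = (b ≫ c.inj j) ≫ d := by rw [← Category.assoc, ← hcond2]
        _ = b ≫ c.inj j ≫ d := by rw [Category.assoc]
    have L : F.map r.op (F.map q.op (F.map g₁.op y)) = F.map (r ≫ a).op (x i) := by
      calc F.map r.op (F.map q.op (F.map g₁.op y))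
          = F.map (r ≫ (q ≫ g₁)).op y := by rw [mapcomp, mapcomp]
        _ = F.map ((r ≫ a) ≫ c.inj i).op y := by
            rw [← hcond1, ← Category.assoc]
        _ = F.map (r ≫ a).op (F.map (c.inj i).op y) := mapcomp _ _ _
        _ = F.map (r ≫ a).op (x i) := by rw [hy' i]
    have R : F.map r.op (F.map q.op (F.map g₂.op y)) = F.map b.op (x j) := by
      calc F.map r.op (F.map q.op (F.map g₂.op y))
          = F.map (r ≫ (q ≫ g₂)).op y := by rw [mapcomp, mapcomp]
        _ = F.map (b ≫ c.inj j).op y := by rw [← hcond2]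
        _ = F.map b.op (F.map (c.inj j).op y) := mapcomp _ _ _
        _ = F.map b.op (x j) := by rw [hy' j]
    rw [L, R]
    exact hx i j _ (r ≫ a) b key
  obtain ⟨t, ht, htu⟩ := hsing (fun _ => y)
    (fun _ _ Z g₁ g₂ hg => ycompat Z g₁ g₂ hg)
  refine ⟨t, fun i => ?_, fun t' ht' => ?_⟩
  · rw [← hd i, mapcomp, ht PUnit.unit, hy' i]
  · refine htu t' (fun _ => ?_)
    apply hbij.1
    funext i
    show F.map (c.inj i).op (F.map d.op t') = F.map (c.inj i).op y
    rw [← mapcomp, hd i, ht' i, hy' i]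

end CechAux

theorem statement1 (κ : Cardinal.{u}) (hκ : κ.IsRegular) (C : Type u) [Category.{u} C]
    [HasPullbacks C] (τ : Pretopology C) (hτ : IsKappaGeometricSite κ C τ)
    (F : Cᵒᵖ ⥤ Type u) :
    Presieve.IsSheaf (τ.toGrothendieck) F ↔
      (PreservesKappaSmallProducts κ F ∧
        ∀ {ι : Type u}, Cardinal.mk ι < κ → ∀ {X : C} (U : ι → C) (f : ∀ i, U i ⟶ X),
          Presieve.ofArrows U f ∈ τ X →
            ∀ (c : Cofan U) (hc : IsColimit c),
              Presieve.IsSheafFor F (Presieve.singleton (hc.desc (Cofan.mk X f)))) := by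
  constructor
  · intro hF
    exact ⟨CechAux.preserves_of_isSheaf hτ hκ hF,
      fun {ι} hι {X} U f hmem c hc => CechAux.singleton_of_isSheaf hτ hF U f hmem c hc⟩
  · rintro ⟨h1, h2⟩
    exact CechAux.isSheaf_of hκ hτ h1 @h2
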